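/- Under threshold selection (mechanism ALL), Property E2 implies selection invariance: for any prediction map f and any bucket z such that some ad with raw prediction z is shown under f, the expected CTR over shown ads in bucket z under f equals E_C[p | z]. Key step: since mechanism ALL shows either all or none of the ads sharing a (z,b) pair, E_f[p | z,b] = E_C[p | z,b] whenever defined, and then E_f[p|z] = E_f[E_C[p|z,b]] = E_C[p|z] by Property E2. -/

import Mathlib

open Finset

/-- `E[p | S]`: the `w`-weighted mean of `p` over a finite set `S` of ads. -/
noncomputable def condMean {n : ℕ} (w p : Fin n → ℝ) (S : Finset (Fin n)) : ℝ :=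
  (∑ i ∈ S, w i * p i) / (∑ i ∈ S, w i)

/-- Threshold selection (mechanism ALL): under prediction map `f`, ad `i` shows iff
`b i * f (z i) ≥ 1`.  Property E2 (`E_C[p | z,b] = E_C[p | z]` whenever defined)
implies selection invariance: for every prediction map `f` and bucket `z'` such that
some ad of bucket `z'` is shown under `f`, the expected CTR over the shown ads of
bucket `z'` equals `E_C[p | z']` — in particular it is the same for all maps. -/
theorem propE2_implies_selection_invariance_ALL (n : ℕ)
    (p b w : Fin n → ℝ) (z : Fin n → ℕ)
    (hp : ∀ i, 0 ≤ p i ∧ p i ≤ 1) (hw : ∀ i, 0 < w i)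
    (hE2 : ∀ i : Fin n,
      condMean w p (Finset.univ.filter (fun j => z j = z i ∧ b j = b i))
        = condMean w p (Finset.univ.filter (fun j => z j = z i))) :
    ∀ (f : ℕ → ℝ) (z' : ℕ),
      (∃ i : Fin n, z i = z' ∧ b i * f (z i) ≥ 1) →
      condMean w p (Finset.univ.filter (fun j => z j = z' ∧ b j * f (z j) ≥ 1))
        = condMean w p (Finset.univ.filter (fun j => z j = z')) := by
  rintro f z' ⟨i0, hz0, hb0⟩
  set S := Finset.univ.filter (fun j => z j = z' ∧ b j * f (z j) ≥ 1) with hS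
  set T := Finset.univ.filter (fun j => z j = z') with hT
  set m := condMean w p T with hm
  have hb0' : b i0 * f z' ≥ 1 := hz0 ▸ hb0
  have hi0S : i0 ∈ S := by simp [hS, hz0, hb0']
  have wpos : ∀ (U : Finset (Fin n)), U.Nonempty → 0 < ∑ i ∈ U, w i := fun U hU =>
    Finset.sum_pos (fun i _ => hw i) hU
  -- fiberwise sums over bid values
  have key : ∀ β ∈ S.image b,
      ∑ i ∈ S.filter (fun j => b j = β), w i * p i
        = m * ∑ i ∈ S.filter (fun j => b j = β), w i := by
    intro β hβ
    obtain ⟨i, hiS, hib⟩ := Finset.mem_image.mp hβ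
    obtain ⟨hzi, hbi⟩ := Finset.mem_filter.mp hiS |>.2
    have hfib : S.filter (fun j => b j = β)
        = Finset.univ.filter (fun j => z j = z i ∧ b j = b i) := by
      ext j
      simp only [hS, Finset.mem_filter, Finset.mem_univ, true_and]
      constructor
      · rintro ⟨⟨hzj, _⟩, hbj⟩
        exact ⟨hzj.trans hzi.symm, hbj.trans hib.symm⟩
      · rintro ⟨hzj, hbj⟩
        have hz' : z j = z' := hzj.trans hzi
        refine ⟨⟨hz', ?_⟩, hbj.trans hib⟩
        rw [hz', hbj, ← hzi]
        exact hbi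
    have hTm : Finset.univ.filter (fun j => z j = z i) = T := by
      ext j; simp [hT, hzi]
    have hE := hE2 i
    rw [hTm] at hE
    have hfibne : (S.filter (fun j => b j = β)).Nonempty :=
      ⟨i, Finset.mem_filter.mpr ⟨hiS, hib⟩⟩
    have hden := wpos _ hfibne
    rw [hfib] at hden ⊢
    unfold condMean at hE
    rw [div_eq_iff hden.ne'] at hE
    exact hE
  have hnum : ∑ i ∈ S, w i * p i = m * ∑ i ∈ S, w i := by
    rw [← Finset.sum_fiberwise_of_maps_to (g := b) (fun i hi => Finset.mem_image_of_mem b hi)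
        (fun i => w i * p i),
        ← Finset.sum_fiberwise_of_maps_to (g := b) (fun i hi => Finset.mem_image_of_mem b hi) w,
        Finset.mul_sum]
    exact Finset.sum_congr rfl key
  have hSpos := wpos S ⟨i0, hi0S⟩
  unfold condMean
  rw [hnum, mul_div_assoc, div_self hSpos.ne', mul_one]
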